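/- Let E be a real inner product space, C a finite index type, M a finite nonempty type, and for each c ∈ C let x_c : M → E and d_c ∈ E with d_c ≠ 0. Suppose the total energy is location-independent: there is a constant K with Σ_{c ∈ C} ‖x_c μ‖² = K for all μ ∈ M. Then μ₀ ∈ M minimizes the total least-squares reconstruction loss μ ↦ Σ_{c ∈ C} (⨅ (β : ℝ), ‖x_c μ − β • d_c‖²) if and only if μ₀ maximizes the total squared normalized correlation μ ↦ Σ_{c ∈ C} ⟪d_c, x_c μ⟫² / ‖d_c‖². -/
import Mathlib


open scoped RealInnerProductSpace

lemma aux_inf {E : Type*} [NormedAddCommGroup E] [InnerProductSpace ℝ E]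
    (v : E) (d : E) (hd : d ≠ 0) :
    (⨅ β : ℝ, ‖v - β • d‖ ^ 2) = ‖v‖ ^ 2 - ⟪d, v⟫ ^ 2 / ‖d‖ ^ 2 := by
  have hdn : (0:ℝ) < ‖d‖ := norm_pos_iff.mpr hd
  have key : ∀ β : ℝ, ‖v - β • d‖ ^ 2
      = ‖v‖ ^ 2 - 2 * β * ⟪d, v⟫ + β ^ 2 * ‖d‖ ^ 2 := by
    intro β
    have := @norm_sub_sq_real E _ _ v (β • d)
    rw [this, real_inner_smul_right, norm_smul, real_inner_comm]
    simp [mul_pow, abs_mul_abs_self, sq_abs]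
    ring
  have hlb : ∀ β : ℝ, ‖v‖ ^ 2 - ⟪d, v⟫ ^ 2 / ‖d‖ ^ 2 ≤ ‖v - β • d‖ ^ 2 := by
    intro β
    rw [key β]
    have h2 : (0:ℝ) < ‖d‖ ^ 2 := by positivity
    have h3 : ⟪d, v⟫ ^ 2 / ‖d‖ ^ 2 * ‖d‖ ^ 2 = ⟪d, v⟫ ^ 2 :=
      div_mul_cancel₀ _ h2.ne'
    nlinarith [sq_nonneg (β * ‖d‖ ^ 2 - ⟪d, v⟫), h2, h3]
  refine le_antisymm ?_ (le_ciInf hlb)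
  have hbdd : BddBelow (Set.range fun β : ℝ => ‖v - β • d‖ ^ 2) :=
    ⟨_, Set.forall_mem_range.mpr hlb⟩
  have := ciInf_le hbdd (⟪d, v⟫ / ‖d‖ ^ 2)
  refine this.trans_eq ?_
  rw [key]
  field_simp
  ring

theorem stmt_11 {E : Type*} [NormedAddCommGroup E] [InnerProductSpace ℝ E]
    {C M : Type*} [Fintype C] [Fintype M] [Nonempty M]
    (x : C → M → E) (d : C → E) (hd : ∀ c, d c ≠ 0)
    (K : ℝ) (hK : ∀ μ : M, (∑ c : C, ‖x c μ‖ ^ 2) = K) (μ₀ : M) :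
    (∀ μ : M, (∑ c : C, ⨅ β : ℝ, ‖x c μ₀ - β • d c‖ ^ 2) ≤
        ∑ c : C, ⨅ β : ℝ, ‖x c μ - β • d c‖ ^ 2) ↔
      (∀ μ : M, (∑ c : C, ⟪d c, x c μ⟫ ^ 2 / ‖d c‖ ^ 2) ≤
        ∑ c : C, ⟪d c, x c μ₀⟫ ^ 2 / ‖d c‖ ^ 2) := by
  have hsum : ∀ μ : M, (∑ c : C, ⨅ β : ℝ, ‖x c μ - β • d c‖ ^ 2)
      = K - ∑ c : C, ⟪d c, x c μ⟫ ^ 2 / ‖d c‖ ^ 2 := by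
    intro μ
    simp_rw [fun c => aux_inf (x c μ) (d c) (hd c), Finset.sum_sub_distrib, hK μ]
  constructor <;> intro h μ <;> have := h μ <;> rw [hsum μ, hsum μ₀] at * <;> linarith
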